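/- For any vertex i of V, the diagonal entry 𝕋 i i of the generic response matrix equals 1 if and only if there is no directed cycle through i, i.e., if and only if (i,i) does not belong to the transitive closure of the edge relation of (V,E). -/

import Mathlib

open Matrix

/-- The generic network matrix `𝔾` over the fraction field of `ℝ[Xₑ : e ∈ E]`:
`𝔾 j i = X (i,j)` if `(i,j) ∈ E`, and `0` otherwise. -/
noncomputable def genG {V : Type*} [Fintype V] [DecidableEq V] (E : Finset (V × V)) :
    Matrix V V (FractionRing (MvPolynomial {e : V × V // e ∈ E} ℝ)) :=
  Matrix.of fun j i =>
    if h : (i, j) ∈ E then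
      algebraMap (MvPolynomial {e : V × V // e ∈ E} ℝ) _ (MvPolynomial.X ⟨(i, j), h⟩)
    else 0

/-- The generic response matrix `𝕋 = (I - 𝔾)⁻¹`. -/
noncomputable def genT {V : Type*} [Fintype V] [DecidableEq V] (E : Finset (V × V)) :
    Matrix V V (FractionRing (MvPolynomial {e : V × V // e ∈ E} ℝ)) :=
  (1 - genG E)⁻¹

namespace Stmt4Aux

open MvPolynomial

lemma det_one_sub_ne_zero {n : Type*} [Fintype n] [DecidableEq n] {σ : Type*}
    (H : Matrix n n (MvPolynomial σ ℝ))
    (h : ∀ a b, constantCoeff (H a b) = 0) :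
    ((1 : Matrix n n (MvPolynomial σ ℝ)) - H).det ≠ 0 := by
  intro h0
  have h1 : ((1 : Matrix n n (MvPolynomial σ ℝ)) - H).map
      (constantCoeff : MvPolynomial σ ℝ →+* ℝ) = 1 := by
    ext a b
    by_cases hab : a = b <;>
      simp [Matrix.map_apply, Matrix.sub_apply, Matrix.one_apply, hab, h]
  have h2 := (constantCoeff (σ := σ) (R := ℝ)).map_det
    ((1 : Matrix n n (MvPolynomial σ ℝ)) - H)
  rw [h0, RingHom.mapMatrix_apply, h1, Matrix.det_one] at h2
  simp at h2

variable {V : Type*} [Fintype V] [DecidableEq V] (E : Finset (V × V))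

/-- Polynomial version of the generic network matrix. -/
noncomputable def G0 : Matrix V V (MvPolynomial {e : V × V // e ∈ E} ℝ) :=
  Matrix.of fun j a => if h : (a, j) ∈ E then MvPolynomial.X ⟨(a, j), h⟩ else 0

lemma genG_eq :
    genG E = (algebraMap (MvPolynomial {e : V × V // e ∈ E} ℝ)
      (FractionRing (MvPolynomial {e : V × V // e ∈ E} ℝ))).mapMatrix (G0 E) := by
  ext j a
  simp only [genG, G0, RingHom.mapMatrix_apply, Matrix.map_apply, Matrix.of_apply]
  rw [apply_dite (algebraMap (MvPolynomial {e : V × V // e ∈ E} ℝ)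
      (FractionRing (MvPolynomial {e : V × V // e ∈ E} ℝ))), map_zero]

lemma one_sub_genG_eq :
    (1 : Matrix V V (FractionRing (MvPolynomial {e : V × V // e ∈ E} ℝ))) - genG E
      = (algebraMap (MvPolynomial {e : V × V // e ∈ E} ℝ)
        (FractionRing (MvPolynomial {e : V × V // e ∈ E} ℝ))).mapMatrix (1 - G0 E) := by
  rw [genG_eq, map_sub, _root_.map_one]

omit [Fintype V] in
lemma cc_G0 : ∀ a b, constantCoeff ((G0 E) a b) = 0 := by
  intro a b
  simp only [G0, Matrix.of_apply]
  split <;> simp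

lemma det_M0_ne : ((1 : Matrix V V (MvPolynomial {e : V × V // e ∈ E} ℝ)) - G0 E).det ≠ 0 :=
  det_one_sub_ne_zero _ (cc_G0 E)

lemma det_M_ne :
    ((1 : Matrix V V (FractionRing (MvPolynomial {e : V × V // e ∈ E} ℝ))) - genG E).det ≠ 0 := by
  rw [one_sub_genG_eq, ← RingHom.map_det]
  intro h
  exact det_M0_ne E (IsFractionRing.injective (MvPolynomial {e : V × V // e ∈ E} ℝ)
    (FractionRing (MvPolynomial {e : V × V // e ∈ E} ℝ)) (by simpa using h))

lemma genT_diag_eq_one (hloop : ∀ i : V, (i, i) ∉ E) (i : V)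
    (hnc : ¬ Relation.TransGen (fun a b : V => (a, b) ∈ E) i i) :
    genT E i i = 1 := by
  classical
  set K := FractionRing (MvPolynomial {e : V × V // e ∈ E} ℝ) with hK
  set M : Matrix V V K := 1 - genG E with hM
  have hdet : IsUnit M.det := isUnit_iff_ne_zero.mpr (det_M_ne E)
  have hMi : M * M⁻¹ = 1 := Matrix.mul_nonsing_inv M hdet
  set x : V → K := fun j => M⁻¹ j i with hxdef
  have hx : M.mulVec x = Pi.single i 1 := by
    ext j
    have h1 : (M * M⁻¹) j i = (1 : Matrix V V K) j i := by rw [hMi]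
    rw [Matrix.mul_apply, Matrix.one_apply] at h1
    simpa [Matrix.mulVec, dotProduct, Pi.single_apply] using h1
  set S : V → Prop := fun j => j = i ∨ Relation.TransGen (fun a b : V => (a, b) ∈ E) i j with hS
  have hclosed : ∀ a j, S a → (a, j) ∈ E → S j := by
    rintro a j (rfl | ha) he
    · exact Or.inr (Relation.TransGen.single he)
    · exact Or.inr (ha.tail he)
  have hMzero : ∀ j a, ¬ S j → S a → M j a = 0 := by
    intro j a hj ha
    have hne : j ≠ a := fun h => hj (h ▸ ha)
    have hnedge : (a, j) ∉ E := fun he => hj (hclosed a j ha he)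
    simp [hM, Matrix.sub_apply, Matrix.one_apply, hne, genG, hnedge]
  have hxS : ∀ a, ¬ S a → x a = 0 := by
    intro a0 ha0
    set B0 : Matrix {j : V // ¬ S j} {j : V // ¬ S j} (MvPolynomial {e : V × V // e ∈ E} ℝ) :=
      (G0 E).submatrix Subtype.val Subtype.val with hB0
    set B : Matrix {j : V // ¬ S j} {j : V // ¬ S j} K :=
      M.submatrix Subtype.val Subtype.val with hB
    have hBeq : B = (algebraMap (MvPolynomial {e : V × V // e ∈ E} ℝ) K).mapMatrix (1 - B0) := by
      ext ⟨j, hj⟩ ⟨a, ha⟩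
      simp only [hB, Matrix.submatrix_apply, hM, Matrix.sub_apply, RingHom.mapMatrix_apply,
        Matrix.map_apply, map_sub, hB0]
      congr 1
      · by_cases h : j = a <;> simp [Matrix.one_apply, Subtype.ext_iff, h]
      · rw [genG_eq]; simp [RingHom.mapMatrix_apply, Matrix.map_apply]; rfl
    have hdetB : B.det ≠ 0 := by
      rw [hBeq, ← RingHom.map_det]
      intro h
      exact det_one_sub_ne_zero B0 (fun a b => cc_G0 E _ _)
        (IsFractionRing.injective (MvPolynomial {e : V × V // e ∈ E} ℝ) K (by simpa using h))
    set y : {j : V // ¬ S j} → K := fun j => x j.1 with hy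
    have hBy : B.mulVec y = 0 := by
      ext ⟨j, hj⟩
      have hji : j ≠ i := fun h => hj (Or.inl h)
      have h0 : (M.mulVec x) j = 0 := by rw [hx]; simp [Pi.single_apply, hji]
      have hsum : ∑ a : V, M j a * x a = 0 := by
        simpa [Matrix.mulVec, dotProduct] using h0
      have hfilter : ∑ a ∈ Finset.univ.filter (fun a => ¬ S a), M j a * x a
          = ∑ a : V, M j a * x a := by
        apply Finset.sum_filter_of_ne
        intro a _ hne
        by_contra hSa
        exact hne (by rw [hMzero j a hj hSa, zero_mul])
      have hsub : ∑ a ∈ Finset.univ.filter (fun a => ¬ S a), M j a * x a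
          = ∑ a : {j : V // ¬ S j}, M j a.1 * x a.1 :=
        Finset.sum_subtype _ (by simp) _
      have : B.mulVec y ⟨j, hj⟩ = ∑ a : {j : V // ¬ S j}, M j a.1 * x a.1 := by
        simp [Matrix.mulVec, dotProduct, hB, hy]
      rw [Pi.zero_apply, this, ← hsub, hfilter, hsum]
    have hy0 : y = 0 := Matrix.eq_zero_of_mulVec_eq_zero hdetB hBy
    exact congrFun hy0 ⟨a0, ha0⟩
  have h1 : (M.mulVec x) i = 1 := by rw [hx]; simp
  have hsum : ∑ a : V, M i a * x a = 1 := by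
    simpa [Matrix.mulVec, dotProduct] using h1
  have hsingle : ∑ a : V, M i a * x a = M i i * x i := by
    apply Finset.sum_eq_single i
    · intro b _ hbi
      by_cases hSb : S b
      · rcases hSb with rfl | hb
        · exact absurd rfl hbi
        · have hnedge : (b, i) ∉ E := fun he => hnc (hb.tail he)
          simp [hM, Matrix.sub_apply, Matrix.one_apply, Ne.symm hbi, genG, hnedge]
      · rw [hxS b hSb, mul_zero]
    · intro h; exact absurd (Finset.mem_univ i) h
  have hMii : M i i = 1 := by
    simp [hM, Matrix.sub_apply, Matrix.one_apply, genG, hloop i]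
  have : x i = 1 := by
    have h2 := hsum
    rw [hsingle, hMii, one_mul] at h2
    exact h2
  simpa [genT, ← hM, hxdef] using this

/-- Real adjacency matrix: `Cr j a = 1` iff there is an edge `a → j`. -/
def Cr : Matrix V V ℝ := Matrix.of fun j a => if (a, j) ∈ E then 1 else 0

lemma Cr_pow_nonneg : ∀ (k : ℕ) (a b : V), 0 ≤ (Cr E ^ k) b a := by
  intro k
  induction k with
  | zero =>
    intro a b
    by_cases h : b = a <;> simp [Matrix.one_apply, h]
  | succ n ih =>
    intro a b
    rw [pow_succ, Matrix.mul_apply]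
    refine Finset.sum_nonneg fun j _ => mul_nonneg (ih j b) ?_
    simp only [Cr, Matrix.of_apply]
    split <;> norm_num

lemma Cr_pos_of_transGen {a b : V}
    (h : Relation.TransGen (fun a b : V => (a, b) ∈ E) a b) :
    ∃ k : ℕ, 0 < (Cr E ^ (k + 1)) b a := by
  induction h with
  | single he => exact ⟨0, by simp [Cr, he]⟩
  | @tail b c hab he ih =>
    obtain ⟨k, hk⟩ := ih
    refine ⟨k + 1, ?_⟩
    rw [pow_succ', Matrix.mul_apply]
    refine Finset.sum_pos' (fun j _ => mul_nonneg ?_ (Cr_pow_nonneg E _ _ _))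
      ⟨b, Finset.mem_univ b, ?_⟩
    · simp only [Cr, Matrix.of_apply]; split <;> norm_num
    · have hcb : Cr E c b = 1 := by simp [Cr, he]
      rw [hcb, one_mul]
      exact hk

lemma genT_diag_ne_one (i : V)
    (hc : Relation.TransGen (fun a b : V => (a, b) ∈ E) i i) :
    genT E i i ≠ 1 := by
  classical
  intro hT
  set R := MvPolynomial {e : V × V // e ∈ E} ℝ with hR
  set K := FractionRing R with hK
  set M : Matrix V V K := 1 - genG E with hM
  have hdet : IsUnit M.det := isUnit_iff_ne_zero.mpr (det_M_ne E)
  have hMi : M * M⁻¹ = 1 := Matrix.mul_nonsing_inv M hdet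
  have hadj : M.adjugate = M.det • M⁻¹ := by
    calc M.adjugate = M.adjugate * (M * M⁻¹) := by rw [hMi, mul_one]
    _ = (M.adjugate * M) * M⁻¹ := by rw [Matrix.mul_assoc]
    _ = (M.det • (1 : Matrix V V K)) * M⁻¹ := by rw [Matrix.adjugate_mul]
    _ = M.det • M⁻¹ := by rw [Matrix.smul_mul, Matrix.one_mul]
  have hTii : M⁻¹ i i = 1 := hT
  have hA : M.adjugate i i = M.det := by
    have h1 : M.adjugate i i = (M.det • M⁻¹) i i := by rw [hadj]
    rw [h1, Matrix.smul_apply, hTii, smul_eq_mul, mul_one]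
  have hmapM : M = (algebraMap R K).mapMatrix (1 - G0 E) := one_sub_genG_eq E
  have hpoly : (1 - G0 E).adjugate i i = (1 - G0 E).det := by
    apply IsFractionRing.injective R K
    have h1 : (algebraMap R K) ((1 - G0 E).adjugate i i) = M.adjugate i i := by
      rw [hmapM, ← RingHom.map_adjugate]
      rfl
    have h2 : (algebraMap R K) ((1 - G0 E).det) = M.det := by
      rw [hmapM, ← RingHom.map_det]
    rw [h1, h2, hA]
  -- push to ℝ[X]
  set φ : R →+* Polynomial ℝ :=
    MvPolynomial.eval₂Hom Polynomial.C (fun _ => Polynomial.X) with hφ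
  set A : Matrix V V (Polynomial ℝ) := φ.mapMatrix (1 - G0 E) with hAdef
  have hApoly : A.adjugate i i = A.det := by
    rw [hAdef, ← RingHom.map_adjugate, ← RingHom.map_det]
    show φ _ = φ _
    rw [hpoly]
  set D : Matrix V V (Polynomial ℝ) := Polynomial.C.mapMatrix (Cr E) with hD
  have hAeq : A = 1 - (Polynomial.X : Polynomial ℝ) • D := by
    ext j a : 1
    simp only [hAdef, RingHom.mapMatrix_apply, Matrix.map_apply, Matrix.sub_apply, map_sub,
      Matrix.smul_apply, smul_eq_mul, hD, Cr, Matrix.of_apply, G0]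
    congr 1
    · by_cases hja : j = a <;> simp [Matrix.one_apply, hja]
    · by_cases h : (a, j) ∈ E
      · rw [dif_pos h, if_pos h, MvPolynomial.eval₂Hom_X', _root_.map_one, mul_one]
      · rw [dif_neg h, if_neg h, map_zero, map_zero, mul_zero]
  obtain ⟨k, hk⟩ := Cr_pos_of_transGen E hc
  set m : ℕ := k + 2 with hm
  set xM : Matrix V V (Polynomial ℝ) := (Polynomial.X : Polynomial ℝ) • D with hxM
  have hxpow : ∀ n : ℕ, xM ^ n = (Polynomial.X : Polynomial ℝ) ^ n • ((Cr E ^ n).map Polynomial.C) := by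
    intro n
    rw [hxM, smul_pow]
    congr 1
    rw [hD, ← map_pow, RingHom.mapMatrix_apply]
  set S : Matrix V V (Polynomial ℝ) := ∑ n ∈ Finset.range m, xM ^ n with hSdef
  have hgeom : A * S = 1 - xM ^ m := by
    rw [hAeq]
    have h := mul_geom_sum xM m
    calc (1 - xM) * S = -((xM - 1) * S) := by rw [← neg_mul, neg_sub]
    _ = 1 - xM ^ m := by rw [hSdef, h, neg_sub]
  have hkey : A.det • S = A.adjugate - A.adjugate * xM ^ m := by
    have h1 : A.adjugate * (A * S) = A.adjugate * (1 - xM ^ m) := by rw [hgeom]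
    rw [← Matrix.mul_assoc, Matrix.adjugate_mul, Matrix.smul_mul, Matrix.one_mul,
      Matrix.mul_sub, Matrix.mul_one] at h1
    exact h1
  set r : Polynomial ℝ := (A.adjugate * ((Cr E ^ m).map Polynomial.C)) i i with hr
  have hiie : A.det * S i i = A.det - Polynomial.X ^ m * r := by
    have h1 : (A.det • S) i i = (A.adjugate - A.adjugate * xM ^ m) i i := by rw [hkey]
    rw [Matrix.smul_apply, smul_eq_mul, Matrix.sub_apply, hApoly] at h1
    rw [h1]
    congr 1
    rw [hxpow m, Matrix.mul_smul, Matrix.smul_apply, smul_eq_mul, hr]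
  have hdvd : Polynomial.X ^ m ∣ A.det * (S i i - 1) := by
    refine ⟨-r, ?_⟩
    have h2 : A.det * (S i i - 1) = A.det * S i i - A.det := by ring
    rw [h2, hiie]
    ring
  have hnotdvdX : ¬ ((Polynomial.X : Polynomial ℝ) ∣ A.det) := by
    rw [Polynomial.X_dvd_iff, Polynomial.coeff_zero_eq_eval_zero]
    have h0 : (Polynomial.evalRingHom (0 : ℝ)) A.det = 1 := by
      rw [RingHom.map_det]
      have h3 : (Polynomial.evalRingHom (0 : ℝ)).mapMatrix A = 1 := by
        ext j a
        rw [hAeq]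
        simp only [RingHom.mapMatrix_apply, Matrix.map_apply, Matrix.sub_apply, map_sub]
        by_cases h : j = a <;>
          simp [Matrix.one_apply, h, hxM, hD, RingHom.mapMatrix_apply, Matrix.map_apply,
            Matrix.smul_apply, smul_eq_mul]
      rw [h3, Matrix.det_one]
    intro hbad
    rw [Polynomial.coe_evalRingHom] at h0
    rw [hbad] at h0
    norm_num at h0
  have hSii : S i i = ∑ n ∈ Finset.range m,
      Polynomial.X ^ n * Polynomial.C ((Cr E ^ n) i i) := by
    rw [hSdef, Matrix.sum_apply]
    refine Finset.sum_congr rfl fun n _ => ?_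
    rw [hxpow n, Matrix.smul_apply, smul_eq_mul, Matrix.map_apply]
  have hQcoeff : (S i i - 1).coeff (k + 1) = (Cr E ^ (k + 1)) i i := by
    rw [Polynomial.coeff_sub, hSii, Polynomial.finset_sum_coeff]
    have h1 : ∀ n ∈ Finset.range m,
        (Polynomial.X ^ n * Polynomial.C ((Cr E ^ n) i i)).coeff (k + 1)
          = if n = k + 1 then (Cr E ^ n) i i else 0 := by
      intro n _
      rw [Polynomial.coeff_mul_C, Polynomial.coeff_X_pow]
      by_cases h : n = k + 1 <;> simp [h, eq_comm]
    rw [Finset.sum_congr rfl h1, Finset.sum_ite_eq' (Finset.range m) (k + 1)]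
    simp [hm, Polynomial.coeff_one]
  have hQne : S i i - 1 ≠ 0 := by
    intro h0
    rw [h0, Polynomial.coeff_zero] at hQcoeff
    exact absurd hQcoeff.symm (ne_of_gt hk)
  have hdeg : (S i i - 1).natDegree ≤ k + 1 := by
    refine le_trans (Polynomial.natDegree_sub_le _ _) (max_le ?_ (by simp))
    rw [hSii]
    refine Polynomial.natDegree_sum_le_of_forall_le _ _ fun n hn => ?_
    refine le_trans (Polynomial.natDegree_mul_le) ?_
    rw [Polynomial.natDegree_X_pow, Polynomial.natDegree_C, add_zero]
    have := Finset.mem_range.mp hn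
    omega
  have hdvdQ : Polynomial.X ^ m ∣ (S i i - 1) :=
    Polynomial.prime_X.pow_dvd_of_dvd_mul_left m hnotdvdX hdvd
  have hfin := Polynomial.natDegree_le_of_dvd hdvdQ hQne
  rw [Polynomial.natDegree_X_pow] at hfin
  omega

end Stmt4Aux

/-- For any vertex `i`, the diagonal generic entry `𝕋 i i` equals `1` iff there is no
directed cycle through `i`, i.e. iff `(i,i)` is not in the transitive closure of `E`. -/
theorem stmt_4 {V : Type*} [Fintype V] [DecidableEq V]
    (E : Finset (V × V)) (hloop : ∀ i : V, (i, i) ∉ E) :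
    ∀ i : V,
      (genT E i i = 1 ↔ ¬ Relation.TransGen (fun a b : V => (a, b) ∈ E) i i) := by
  intro i
  constructor
  · intro hT hc
    exact Stmt4Aux.genT_diag_ne_one E i hc hT
  · exact Stmt4Aux.genT_diag_eq_one E hloop i
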